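/- Let V be a graded vector space with grading operator L(0), let φ be an analytic map from ℂ^× to Hom(V, \bar{V}) with weight w ∈ ℤ satisfying [L(0), φ(z)] = z(d/dz)φ(z) + w·φ(z), and let L(-1) be an operator satisfying [L(-1), φ(z)] = (d/dz)φ(z). Then for a ∈ ℂ and z ∈ ℂ^× with |z| > |a|, e^{aL(-1)} φ(z) e^{-aL(-1)} = φ(z + a), where the left side is understood via the convergent expansion of matrix coefficients. -/

import Mathlib

/- STATEMENT 6: e^{aL(-1)} φ(z) e^{-aL(-1)} = φ(z+a) for |z| > |a|, for a field
φ of weight w satisfying the L(0)- and L(-1)-bracket formulas.  The left-hand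
side is interpreted through the convergent double series of matrix
coefficients ⟨v', L(-1)^i φ(z) L(-1)^j v⟩ a^i (-a)^j / (i! j!).  V̄ = ∏ V_(n)
is modeled by functions ℤ → V with values in the graded pieces, and L(-1)
extends to V̄ by acting on components with a degree shift. -/

open Complex

/-- Pairing of a functional with an element of the completion V̄. -/
noncomputable def pairF {V : Type} [AddCommGroup V] [Module ℂ V]
    (v' : Module.Dual ℂ V) (w : ℤ → V) : ℂ := ∑' n : ℤ, v' (w n)

/-- The extension of an operator of weight 1 to the completion V̄. -/
def shiftOp {V : Type} [AddCommGroup V] [Module ℂ V]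
    (L : V →ₗ[ℂ] V) (w : ℤ → V) : ℤ → V := fun n => L (w (n - 1))

open Finset



lemma auxSummable (c x : ℂ) (hx : ‖x‖ < 1) :
    Summable fun k : ℕ => ‖(∏ t ∈ Finset.range k, (c - (t : ℂ))) / (k.factorial : ℂ) * x ^ k‖ := by
  set r : ℝ := (1 + ‖x‖) / 2 with hr
  have hr1 : r < 1 := by rw [hr]; linarith
  have hxr : ‖x‖ < r := by rw [hr]; linarith
  have hr0 : 0 < r := lt_of_le_of_lt (norm_nonneg x) hxr
  apply summable_of_ratio_norm_eventually_le hr1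
  rw [Filter.eventually_atTop]
  refine ⟨⌈(‖x‖ * ‖c‖) / (r - ‖x‖)⌉₊, fun k hk => ?_⟩
  have hk' : (‖x‖ * ‖c‖) / (r - ‖x‖) ≤ (k : ℝ) := Nat.ceil_le.mp hk
  have hrx : (0:ℝ) < r - ‖x‖ := by linarith
  have key : ‖x‖ * (‖c‖ + k) ≤ r * ((k:ℝ) + 1) := by
    have h2 := (div_le_iff₀ hrx).mp hk'
    nlinarith [norm_nonneg x, norm_nonneg c]
  have hfne : ((k.factorial : ℂ)) ≠ 0 := Nat.cast_ne_zero.mpr k.factorial_ne_zero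
  have hmne : ((k:ℂ)+1) ≠ 0 := Nat.cast_add_one_ne_zero k
  have hgs : (∏ t ∈ Finset.range (k+1), (c - (t:ℂ))) / (((k+1).factorial : ℕ) : ℂ) * x ^ (k+1)
      = ((∏ t ∈ Finset.range k, (c - (t:ℂ))) / (k.factorial : ℂ) * x ^ k) * ((c - k) * x / ((k:ℂ)+1)) := by
    rw [Finset.prod_range_succ, Nat.factorial_succ]
    push_cast
    field_simp
    ring
  rw [norm_norm, norm_norm, hgs, norm_mul]
  rw [mul_comm r _]
  apply mul_le_mul_of_nonneg_left ?_ (norm_nonneg _)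
  have h3 : ‖(c - (k:ℂ)) * x / ((k:ℂ)+1)‖ = ‖c - (k:ℂ)‖ * ‖x‖ / ((k:ℝ)+1) := by
    rw [norm_div, norm_mul]
    congr 1
    simpa using Complex.norm_natCast (k+1)
  rw [h3]
  rw [div_le_iff₀ (by positivity)]
  have h4 : ‖c - (k:ℂ)‖ ≤ ‖c‖ + (k:ℝ) := by
    refine (norm_sub_le _ _).trans ?_
    simp [Complex.norm_natCast]
  calc ‖c - (k:ℂ)‖ * ‖x‖ ≤ (‖c‖ + (k:ℝ)) * ‖x‖ :=
        mul_le_mul_of_nonneg_right h4 (norm_nonneg x)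
    _ ≤ r * ((k:ℝ)+1) := by rw [mul_comm]; exact key



lemma auxBinomStep (x c : ℂ) (B : ℂ)
    (h : HasSum (fun k : ℕ => (∏ t ∈ Finset.range k, (c - (t:ℂ))) / (k.factorial : ℂ) * x ^ k) B) :
    HasSum (fun k : ℕ => (∏ t ∈ Finset.range k, (c + 1 - (t:ℂ))) / (k.factorial : ℂ) * x ^ k)
      ((1 + x) * B) := by
  set f : ℕ → ℂ := fun k => (∏ t ∈ Finset.range k, (c - (t:ℂ))) / (k.factorial : ℂ) * x ^ k with hf
  set g : ℕ → ℂ := fun k => Nat.rec 0 (fun m _ => x * f m) k with hg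
  have hg0 : g 0 = 0 := rfl
  have hgs : ∀ m, g (m+1) = x * f m := fun m => rfl
  have h2 : HasSum (fun m => g (m+1)) (x * B) := by
    simp only [hgs]
    exact h.mul_left x
  have h3 : HasSum g (x * B) := by
    have h4 := (hasSum_nat_add_iff (f := g) 1).mp (by simpa using h2)
    simpa [hg0] using h4
  have h4 := h.add h3
  have heq : ∀ k : ℕ, (∏ t ∈ Finset.range k, (c + 1 - (t:ℂ))) / (k.factorial : ℂ) * x ^ k
      = f k + g k := by
    intro k
    cases k with
    | zero => simp [hf, hg0]
    | succ m =>
      rw [hgs]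
      have hp1 : (∏ t ∈ Finset.range (m+1), (c + 1 - (t:ℂ)))
          = (∏ t ∈ Finset.range m, (c - (t:ℂ))) * (c+1) := by
        rw [Finset.prod_range_succ']
        congr 1
        · exact Finset.prod_congr rfl (fun t _ => by push_cast; ring)
        · simp
      have hp2 : (∏ t ∈ Finset.range (m+1), (c - (t:ℂ)))
          = (∏ t ∈ Finset.range m, (c - (t:ℂ))) * (c - m) := Finset.prod_range_succ _ _
      have hfne : ((m.factorial : ℂ)) ≠ 0 := Nat.cast_ne_zero.mpr m.factorial_ne_zero
      have hmne : ((m:ℂ)+1) ≠ 0 := Nat.cast_add_one_ne_zero m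
      simp only [hf]
      rw [hp1, hp2, Nat.factorial_succ]
      push_cast
      field_simp
      ring
  have h5 : (fun k : ℕ => (∏ t ∈ Finset.range k, (c + 1 - (t:ℂ))) / (k.factorial : ℂ) * x ^ k)
      = (fun k => f k + g k) := funext heq
  rw [h5, show (1+x)*B = B + x*B by ring]
  exact h4

lemma auxBinom (e : ℤ) (x : ℂ) (hx : ‖x‖ < 1) :
    HasSum (fun k : ℕ => (∏ t ∈ Finset.range k, ((e:ℂ) - (t:ℂ))) / (k.factorial : ℂ) * x ^ k)
      ((1 + x) ^ e) := by
  have hx1 : (1 : ℂ) + x ≠ 0 := by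
    intro h
    have hx2 : x = -1 := by linear_combination h
    rw [hx2] at hx
    simp at hx
  have hcast : ∀ (c₁ c₂ : ℂ), c₁ = c₂ →
      (fun k : ℕ => (∏ t ∈ Finset.range k, (c₁ - (t:ℂ))) / (k.factorial:ℂ) * x^k)
      = (fun k : ℕ => (∏ t ∈ Finset.range k, (c₂ - (t:ℂ))) / (k.factorial:ℂ) * x^k) := by
    intro _ _ h; rw [h]
  induction e using Int.induction_on with
  | zero =>
    have hfun : (fun k : ℕ => (∏ t ∈ Finset.range k, (((0:ℤ):ℂ) - (t:ℂ))) / (k.factorial : ℂ) * x ^ k)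
        = (fun k : ℕ => if k = 0 then (1:ℂ) else 0) := by
      funext k
      cases k with
      | zero => simp
      | succ m =>
        rw [if_neg (Nat.succ_ne_zero m)]
        rw [Finset.prod_eq_zero (Finset.mem_range.mpr (Nat.succ_pos m)) (by simp)]
        simp
    rw [hfun, zpow_zero]
    exact hasSum_ite_eq 0 1
  | succ i ih =>
    have hstep := auxBinomStep x ((i:ℤ):ℂ) _ ih
    rw [hcast (((i:ℤ):ℂ) + 1) (((i:ℤ)+1 : ℤ):ℂ) (by push_cast; ring)] at hstep
    rw [show ((1:ℂ)+x)^((i:ℤ)+1) = (1+x) * (1+x)^(i:ℤ) by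
      rw [zpow_add_one₀ hx1]; ring]
    exact hstep
  | pred i ih =>
    obtain ⟨B, hB⟩ := (auxSummable (((-(i:ℤ)-1 : ℤ)):ℂ) x hx).of_norm
    have hstep := auxBinomStep x (((-(i:ℤ)-1 : ℤ)):ℂ) B hB
    rw [hcast ((((-(i:ℤ)-1 : ℤ)):ℂ) + 1) (((-(i:ℤ) : ℤ)):ℂ) (by push_cast; ring)] at hstep
    have huniq : (1+x) * B = (1+x) ^ (-(i:ℤ)) := hstep.unique ih
    have hBval : B = (1+x) ^ (-(i:ℤ)-1) := by
      rw [zpow_sub_one₀ hx1, ← huniq]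
      field_simp
    rw [← hBval]
    exact hB



lemma auxODE (f : ℂ → ℂ) (k : ℤ) (z : ℂ) (hz : z ≠ 0)
    (h : ∀ ζ : ℂ, ζ ≠ 0 → ∃ d', HasDerivAt f d' ζ ∧ ((k:ℤ):ℂ) * f ζ = ζ * d')
    (ζ : ℂ) (hζ : ζ ∈ Metric.ball z ‖z‖) :
    f ζ * z ^ k = f z * ζ ^ k := by
  have hball : ∀ y : ℂ, y ∈ Metric.ball z ‖z‖ → y ≠ 0 := by
    intro y hy h0
    rw [Metric.mem_ball, h0, dist_eq_norm, zero_sub, norm_neg] at hy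
    exact lt_irrefl _ hy
  have hg : ∀ y ∈ Metric.ball z ‖z‖, HasDerivAt (fun y : ℂ => f y * y ^ (-k)) 0 y := by
    intro y hy
    have hy0 := hball y hy
    obtain ⟨d', hd, heq⟩ := h y hy0
    have h1 : HasDerivAt (fun y : ℂ => y ^ (-k)) (-(k:ℂ) * y ^ (-k - 1)) y := by
      have := hasDerivAt_zpow (-k) y (Or.inl hy0)
      simpa using this
    have h2 : HasDerivAt (fun y : ℂ => f y * y ^ (-k)) _ y := hd.mul h1
    convert h2 using 1
    have h3 : y ^ (-k) = y ^ (-k-1) * y := by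
      rw [← zpow_add_one₀ hy0]
      ring_nf
    rw [h3]
    push_cast at heq
    linear_combination (y ^ (-k-1)) * heq
  have hconst : f ζ * ζ ^ (-k) = f z * z ^ (-k) := by
    have := Convex.is_const_of_fderivWithin_eq_zero (𝕜 := ℂ)
      (f := fun y : ℂ => f y * y ^ (-k)) (convex_ball z ‖z‖)
      (fun y hy => ((hg y hy).differentiableAt).differentiableWithinAt)
      (fun y hy => by
        rw [fderivWithin_of_isOpen Metric.isOpen_ball hy, ((hg y hy).hasFDerivAt).fderiv]
        ext u
        simp)
      hζ (Metric.mem_ball_self (norm_pos_iff.mpr hz))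
    exact this
  have hζ0 := hball ζ hζ
  rw [zpow_neg, zpow_neg] at hconst
  have hzk : z ^ k ≠ 0 := zpow_ne_zero k hz
  have hζk : ζ ^ k ≠ 0 := zpow_ne_zero k hζ0
  field_simp at hconst
  linear_combination hconst



set_option maxHeartbeats 1000000 in
lemma keyLemma
    (V : Type) [AddCommGroup V] [Module ℂ V]
    (A : ℤ → Submodule ℂ V)
    (N₀ : ℤ) (hbdd : ∀ n < N₀, A n = ⊥)
    (φ : ℂ → V →ₗ[ℂ] (ℤ → V))
    (hφA : ∀ (z : ℂ) (v : V) (n : ℤ), (φ z v) n ∈ A n)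
    (w : ℤ)
    (hL0 : ∀ (m : ℤ) (v : V), v ∈ A m → ∀ (d : ℤ) (l : Module.Dual ℂ V) (z : ℂ), z ≠ 0 →
      ∃ d' : ℂ, HasDerivAt (fun z => l ((φ z v) d)) d' z ∧
        ((d : ℂ) - (m : ℂ)) * l ((φ z v) d) = z * d' + (w : ℂ) * l ((φ z v) d))
    (Lm1 : V →ₗ[ℂ] V)
    (hLm1wt : ∀ (n : ℤ) (v : V), v ∈ A n → Lm1 v ∈ A (n + 1))
    (hLm1 : ∀ (v : V) (d : ℤ) (l : Module.Dual ℂ V) (z : ℂ), z ≠ 0 →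
      HasDerivAt (fun z => l ((φ z v) d))
        (l (Lm1 ((φ z v) (d - 1)) - (φ z (Lm1 v)) d)) z)
    (a z : ℂ) (hz : z ≠ 0) (haz : ‖a‖ < ‖z‖)
    (u : V) (m : ℤ) (hu : u ∈ A m)
    (v' : Module.Dual ℂ V) (n : ℤ) :
    Summable (fun ij : ℕ × ℕ =>
      ‖(a ^ ij.1 / (ij.1.factorial : ℂ)) * ((-a) ^ ij.2 / (ij.2.factorial : ℂ)) *
        v' ((Lm1 ^ ij.1) ((φ z ((Lm1 ^ ij.2) u)) (n - ij.1)))‖) ∧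
    (∑' ij : ℕ × ℕ, (a ^ ij.1 / (ij.1.factorial : ℂ)) * ((-a) ^ ij.2 / (ij.2.factorial : ℂ)) *
        v' ((Lm1 ^ ij.1) ((φ z ((Lm1 ^ ij.2) u)) (n - ij.1))))
      = v' ((φ (z + a) u) n) := by
  classical
  have hz0 : (0:ℝ) < ‖z‖ := norm_pos_iff.mpr hz
  -- powers of Lm1 raise degree
  have hpowwt : ∀ (j : ℕ), (Lm1 ^ j) u ∈ A (m + j) := by
    intro j
    induction j with
    | zero => simpa using hu
    | succ j ih =>
      have h1 := hLm1wt (m + j) _ ih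
      rw [pow_succ', Module.End.mul_apply]
      convert h1 using 2
      push_cast
      ring
  set c : ℕ → ℕ → ℂ → ℂ :=
    fun i j ζ => v' ((Lm1 ^ i) ((φ ζ ((Lm1 ^ j) u)) (n - i))) with hc
  clear_value c
  set e : ℤ := n - m - w with he
  clear_value e
  set γ : ℕ → ℕ → ℂ := fun i j => c i j z * z ^ (i + j) with hγ
  clear_value γ
  -- the ODE from hL0
  have hODE : ∀ (i j : ℕ) (ζ : ℂ), ζ ≠ 0 →
      ∃ d', HasDerivAt (c i j) d' ζ ∧ (((e - i - j : ℤ)):ℂ) * c i j ζ = ζ * d' := by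
    intro i j ζ hζ
    simp only [hc, he]
    obtain ⟨d', hd, heq⟩ := hL0 (m + j) ((Lm1 ^ j) u) (hpowwt j) (n - i) (v'.comp (Lm1 ^ i)) ζ hζ
    simp only [LinearMap.comp_apply] at hd heq
    refine ⟨d', hd, ?_⟩
    push_cast at heq ⊢
    linear_combination heq
  -- monomial behaviour on the ball around z
  have hmono : ∀ (i j : ℕ) (ζ : ℂ), ζ ∈ Metric.ball z ‖z‖ →
      c i j ζ * z ^ (e - i - j) = c i j z * ζ ^ (e - i - j) :=
    fun i j ζ hζ => auxODE (c i j) (e - i - j) z hz (hODE i j) ζ hζ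
  -- derivative from hLm1
  have hder : ∀ i j : ℕ, HasDerivAt (c i j) (c (i+1) j z - c i (j+1) z) z := by
    intro i j
    have hD := hLm1 ((Lm1 ^ j) u) (n - i) (v'.comp (Lm1 ^ i)) z hz
    simp only [LinearMap.comp_apply, map_sub] at hD
    have e1 : v' ((Lm1 ^ i) (Lm1 ((φ z ((Lm1 ^ j) u)) (n - i - 1)))) = c (i+1) j z := by
      simp only [hc]
      rw [pow_succ, Module.End.mul_apply]
      congr 2
      push_cast
      ring
    have e2 : v' ((Lm1 ^ i) ((φ z (Lm1 ((Lm1 ^ j) u))) (n - i))) = c i (j+1) z := by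
      simp only [hc]
      rw [pow_succ', Module.End.mul_apply]
    rw [← e1, ← e2]
    have e3 : c i j = fun ζ => v' ((Lm1 ^ i) ((φ ζ ((Lm1 ^ j) u)) (n - i))) := by
      funext ζ; simp only [hc]
    rw [e3]
    exact hD
  -- recursion for γ
  have hrec : ∀ i j : ℕ, ((e:ℂ) - i - j) * γ i j = γ (i+1) j - γ i (j+1) := by
    intro i j
    obtain ⟨d', hd, heq⟩ := hODE i j z hz
    have hu' := hd.unique (hder i j)
    rw [hu'] at heq
    simp only [hγ]
    push_cast at heq ⊢
    linear_combination (z ^ (i + j)) * heq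
  -- vanishing for low degree
  have hvanish : ∀ (i j : ℕ) (ζ : ℂ), (n - (i:ℤ) < N₀) → c i j ζ = 0 := by
    intro i j ζ hni
    have h1 : (φ ζ ((Lm1 ^ j) u)) (n - i) ∈ A (n - i) := hφA _ _ _
    rw [hbdd _ hni] at h1
    have h2 : (φ ζ ((Lm1 ^ j) u)) (n - i) = 0 := (Submodule.mem_bot ℂ).mp h1
    simp only [hc, h2, map_zero]
  set I : ℕ := (n - N₀).toNat with hI
  clear_value I
  have hγ0 : ∀ i j : ℕ, I < i → γ i j = 0 := by
    intro i j hi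
    have h1 : (n - N₀ : ℤ) ≤ (I:ℤ) := hI ▸ Int.self_le_toNat _
    have h2 : n - (i:ℤ) < N₀ := by omega
    simp only [hγ, hvanish i j z h2, zero_mul]
  set B : ℕ := e.natAbs + I + 1 with hB
  clear_value B
  set P : ℕ → ℝ := fun j => ∏ t ∈ Finset.range j, ((B:ℝ) + 1 + t) with hP
  clear_value P
  have hP0 : ∀ j, 0 < P j := by
    intro j
    simp only [hP]
    exact Finset.prod_pos (fun t _ => by positivity)
  set M : ℝ := ∑ i ∈ Finset.range (I+1), ‖γ i 0‖ with hM
  clear_value M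
  have hM0 : 0 ≤ M := by
    rw [hM]
    exact Finset.sum_nonneg fun _ _ => norm_nonneg _
  have habs : ∀ (i j : ℕ), i ≤ I → ‖(e:ℂ) - i - j‖ ≤ (B:ℝ) + j := by
    intro i j hi
    have h1 : ((e:ℂ) - i - j) = ((e - i - j : ℤ) : ℂ) := by push_cast; ring
    rw [h1, Complex.norm_intCast]
    have h2 : |e - (i:ℤ) - j| ≤ (B:ℤ) + j := by
      rw [abs_le]
      omega
    rw [← Int.cast_abs]
    exact_mod_cast h2
  have hbound : ∀ (j i : ℕ), ‖γ i j‖ ≤ M * P j := by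
    intro j
    induction j with
    | zero =>
      intro i
      rcases le_or_gt i I with hi | hi
      · have h1 : ‖γ i 0‖ ≤ M := by
          rw [hM]
          exact Finset.single_le_sum (f := fun i => ‖γ i 0‖) (fun _ _ => norm_nonneg _)
            (Finset.mem_range.mpr (by omega))
        have h2 : P 0 = 1 := by simp [hP]
        rw [h2, mul_one]
        exact h1
      · rw [hγ0 i 0 hi, norm_zero]
        exact mul_nonneg hM0 (hP0 0).le
    | succ j ih =>
      intro i
      rcases le_or_gt i I with hi | hi
      · have h1 : γ i (j+1) = γ (i+1) j - ((e:ℂ) - i - j) * γ i j := by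
          have := hrec i j
          push_cast at this ⊢
          linear_combination this
        rw [h1]
        have hPs : P (j+1) = P j * ((B:ℝ) + 1 + j) := by
          simp only [hP]
          rw [Finset.prod_range_succ]
        calc ‖γ (i+1) j - ((e:ℂ) - i - j) * γ i j‖
            ≤ ‖γ (i+1) j‖ + ‖(e:ℂ) - i - j‖ * ‖γ i j‖ := by
              refine (norm_sub_le _ _).trans ?_
              rw [norm_mul]
          _ ≤ M * P j + ((B:ℝ) + j) * (M * P j) :=
              add_le_add (ih (i+1))
                (mul_le_mul (habs i j hi) (ih i) (norm_nonneg _)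
                  (by positivity))
          _ = M * P (j+1) := by rw [hPs]; ring
      · rw [hγ0 i (j+1) hi, norm_zero]
        exact mul_nonneg hM0 (hP0 _).le
  -- comparison series
  set x : ℂ := ((‖a‖ / ‖z‖ : ℝ) : ℂ) with hxdef
  clear_value x
  have hxnorm : ‖x‖ = ‖a‖ / ‖z‖ := by
    rw [hxdef, Complex.norm_real]
    exact abs_of_nonneg (by positivity)
  have hx1 : ‖x‖ < 1 := by
    rw [hxnorm]
    exact (div_lt_one hz0).mpr haz
  have hcomp := auxSummable (-((B:ℂ)+1)) x hx1
  have hcompval : ∀ k : ℕ, ‖(∏ t ∈ Finset.range k, (-((B:ℂ)+1) - (t:ℂ))) / (k.factorial:ℂ) * x^k‖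
      = P k * (‖a‖/‖z‖)^k / (k.factorial : ℝ) := by
    intro k
    rw [norm_mul, norm_div, norm_prod, norm_pow, hxnorm]
    have h1 : ∀ t : ℕ, ‖-((B:ℂ)+1) - (t:ℂ)‖ = ((B:ℝ)+1+t) := by
      intro t
      rw [show -((B:ℂ)+1) - (t:ℂ) = -(((B+1+t : ℕ)) : ℂ) by push_cast; ring, norm_neg,
        Complex.norm_natCast]
      push_cast
      ring
    rw [Finset.prod_congr rfl (fun t _ => h1 t), Complex.norm_natCast]
    simp only [hP]
    ring
  -- row summability
  have hrow : ∀ i : ℕ,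
      Summable (fun j : ℕ => ‖(a ^ i / (i.factorial : ℂ)) * ((-a) ^ j / (j.factorial : ℂ)) * c i j z‖) := by
    intro i
    have hbase := hcomp.mul_left (‖a‖^i / ((i.factorial : ℝ) * ‖z‖^i) * M)
    apply Summable.of_nonneg_of_le (fun j => norm_nonneg _) ?_ hbase
    intro j
    have hcle : ‖c i j z‖ * ‖z‖^(i+j) ≤ M * P j := by
      have h1 : ‖γ i j‖ = ‖c i j z‖ * ‖z‖^(i+j) := by
        simp only [hγ]
        rw [norm_mul, norm_pow]
      rw [← h1]
      exact hbound j i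
    have h2 : ‖c i j z‖ ≤ M * P j / ‖z‖^(i+j) := by
      rw [le_div_iff₀ (by positivity)]
      exact hcle
    have h3 : ‖(a ^ i / (i.factorial : ℂ)) * ((-a) ^ j / (j.factorial : ℂ)) * c i j z‖
        = (‖a‖^i / (i.factorial : ℝ)) * (‖a‖^j / (j.factorial : ℝ)) * ‖c i j z‖ := by
      rw [norm_mul, norm_mul, norm_div, norm_div, norm_pow, norm_pow, norm_neg,
        Complex.norm_natCast, Complex.norm_natCast]
    rw [h3, hcompval j]
    calc (‖a‖^i / (i.factorial : ℝ)) * (‖a‖^j / (j.factorial : ℝ)) * ‖c i j z‖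
        ≤ (‖a‖^i / (i.factorial : ℝ)) * (‖a‖^j / (j.factorial : ℝ)) * (M * P j / ‖z‖^(i+j)) := by
          gcongr
      _ = ‖a‖^i / ((i.factorial : ℝ) * ‖z‖^i) * M * (P j * (‖a‖/‖z‖)^j / (j.factorial : ℝ)) := by
          rw [pow_add, div_pow]
          have hfi : ((i.factorial : ℝ)) ≠ 0 := Nat.cast_ne_zero.mpr i.factorial_ne_zero
          have hfj : ((j.factorial : ℝ)) ≠ 0 := Nat.cast_ne_zero.mpr j.factorial_ne_zero
          have hzi : (‖z‖:ℝ)^i ≠ 0 := by positivity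
          have hzj : (‖z‖:ℝ)^j ≠ 0 := by positivity
          field_simp
  -- vanishing rows
  have hrow0 : ∀ i : ℕ, I < i → ∀ j : ℕ,
      ‖(a ^ i / (i.factorial : ℂ)) * ((-a) ^ j / (j.factorial : ℂ)) * c i j z‖ = 0 := by
    intro i hi j
    have h1 : (n - N₀ : ℤ) ≤ (I:ℤ) := hI ▸ Int.self_le_toNat _
    rw [hvanish i j z (by omega), mul_zero, norm_zero]
  -- full summability
  set F : ℕ × ℕ → ℂ := fun ij =>
    (a ^ ij.1 / (ij.1.factorial : ℂ)) * ((-a) ^ ij.2 / (ij.2.factorial : ℂ)) * c ij.1 ij.2 z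
    with hF
  clear_value F
  have hsumN : Summable (fun ij : ℕ × ℕ => ‖F ij‖) := by
    rw [summable_prod_of_nonneg (fun ij => norm_nonneg _)]
    constructor
    · intro i
      simp only [hF]
      exact hrow i
    · apply summable_of_ne_finset_zero (s := Finset.range (I+1))
      intro i hi
      have hi' : I < i := by
        simp only [Finset.mem_range] at hi
        omega
      have h1 : ∀ j : ℕ, ‖F (i, j)‖ = 0 := fun j => by
        simp only [hF]
        exact hrow0 i hi' j
      rw [tsum_congr h1, tsum_zero]
  have hFs : Summable F := hsumN.of_norm
  -- rearrange into diagonal sums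
  have h8 : ∑' ij : ℕ × ℕ, F ij = ∑' k : ℕ, ∑ p ∈ Finset.HasAntidiagonal.antidiagonal k, F p := by
    have hGs : Summable (fun σ : (Σ k : ℕ, {p : ℕ × ℕ // p ∈ Finset.HasAntidiagonal.antidiagonal k}) =>
        F (Finset.HasAntidiagonal.sigmaAntidiagonalEquivProd σ)) := (Equiv.summable_iff _).mpr hFs
    have h8a : ∑' ij : ℕ × ℕ, F ij
        = ∑' σ : (Σ k : ℕ, {p : ℕ × ℕ // p ∈ Finset.HasAntidiagonal.antidiagonal k}),
            F (Finset.HasAntidiagonal.sigmaAntidiagonalEquivProd σ) := (Equiv.tsum_eq _ F).symm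
    have h8b := Summable.tsum_sigma hGs
    rw [h8a, h8b]
    exact tsum_congr fun k => Finset.tsum_subtype _ _
  set T : ℕ → ℂ := fun k =>
    ∑ p ∈ Finset.HasAntidiagonal.antidiagonal k, ((-1:ℂ)) ^ p.2 / ((p.1.factorial : ℂ) * (p.2.factorial : ℂ)) * γ p.1 p.2
    with hT
  clear_value T
  have hdiag : ∀ k : ℕ, ∑ p ∈ Finset.HasAntidiagonal.antidiagonal k, F p = (a / z) ^ k * T k := by
    intro k
    simp only [hT]
    rw [Finset.mul_sum]
    refine Finset.sum_congr rfl fun p hp => ?_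
    have hpk : p.1 + p.2 = k := Finset.HasAntidiagonal.mem_antidiagonal.mp hp
    simp only [hF, hγ]
    rw [← hpk]
    have hf1 : ((p.1.factorial : ℂ)) ≠ 0 := Nat.cast_ne_zero.mpr p.1.factorial_ne_zero
    have hf2 : ((p.2.factorial : ℂ)) ≠ 0 := Nat.cast_ne_zero.mpr p.2.factorial_ne_zero
    have hzp : (z : ℂ) ^ (p.1 + p.2) ≠ 0 := pow_ne_zero _ hz
    rw [neg_pow, div_pow]
    field_simp
    ring
  -- recursion for the diagonal sums
  have hTrec : ∀ k : ℕ, ((k:ℂ) + 1) * T (k+1) = ((e:ℂ) - k) * T k := by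
    intro k
    have hL : ((e:ℂ) - k) * T k
        = ∑ p ∈ Finset.HasAntidiagonal.antidiagonal k, ((-1:ℂ))^p.2 / ((p.1.factorial : ℂ) * (p.2.factorial : ℂ)) *
            (γ (p.1+1) p.2 - γ p.1 (p.2+1)) := by
      simp only [hT]
      rw [Finset.mul_sum]
      refine Finset.sum_congr rfl fun p hp => ?_
      have hpk : p.1 + p.2 = k := Finset.HasAntidiagonal.mem_antidiagonal.mp hp
      have h1 := hrec p.1 p.2
      rw [← hpk]
      push_cast
      linear_combination ((-1:ℂ))^p.2 / ((p.1.factorial : ℂ) * (p.2.factorial : ℂ)) * h1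
    have hR1 : ∑ p ∈ Finset.HasAntidiagonal.antidiagonal k,
          ((-1:ℂ))^p.2 / ((p.1.factorial : ℂ) * (p.2.factorial : ℂ)) * γ (p.1+1) p.2
        = ∑ p ∈ Finset.HasAntidiagonal.antidiagonal (k+1),
            (p.1 : ℂ) * (((-1:ℂ))^p.2 / ((p.1.factorial : ℂ) * (p.2.factorial : ℂ)) * γ p.1 p.2) := by
      rw [Finset.Nat.sum_antidiagonal_succ
        (f := fun p => (p.1 : ℂ) * (((-1:ℂ))^p.2 / ((p.1.factorial : ℂ) * (p.2.factorial : ℂ)) * γ p.1 p.2))]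
      rw [show ((((0:ℕ),(k+1:ℕ)).1 : ℂ)) * ((((-1:ℂ))^((0:ℕ),(k+1:ℕ)).2 /
        ((((0:ℕ),(k+1:ℕ)).1.factorial : ℂ) * (((0:ℕ),(k+1:ℕ)).2.factorial : ℂ))) *
        γ ((0:ℕ),(k+1:ℕ)).1 ((0:ℕ),(k+1:ℕ)).2) = 0 by simp, zero_add]
      refine Finset.sum_congr rfl fun p hp => ?_
      have hf1 : ((p.1.factorial : ℂ)) ≠ 0 := Nat.cast_ne_zero.mpr p.1.factorial_ne_zero
      have hf2 : ((p.2.factorial : ℂ)) ≠ 0 := Nat.cast_ne_zero.mpr p.2.factorial_ne_zero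
      rw [Nat.factorial_succ]
      push_cast
      have hne : ((p.1:ℂ) + 1) ≠ 0 := by
        intro h0
        have := Nat.cast_add_one_ne_zero (R := ℂ) p.1
        exact this h0
      field_simp
    have hR2 : ∑ p ∈ Finset.HasAntidiagonal.antidiagonal k,
          -(((-1:ℂ))^p.2 / ((p.1.factorial : ℂ) * (p.2.factorial : ℂ)) * γ p.1 (p.2+1))
        = ∑ p ∈ Finset.HasAntidiagonal.antidiagonal (k+1),
            (p.2 : ℂ) * (((-1:ℂ))^p.2 / ((p.1.factorial : ℂ) * (p.2.factorial : ℂ)) * γ p.1 p.2) := by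
      rw [Finset.Nat.sum_antidiagonal_succ'
        (f := fun p => (p.2 : ℂ) * (((-1:ℂ))^p.2 / ((p.1.factorial : ℂ) * (p.2.factorial : ℂ)) * γ p.1 p.2))]
      rw [show ((((k+1:ℕ),(0:ℕ)).2 : ℂ)) * ((((-1:ℂ))^((k+1:ℕ),(0:ℕ)).2 /
        ((((k+1:ℕ),(0:ℕ)).1.factorial : ℂ) * (((k+1:ℕ),(0:ℕ)).2.factorial : ℂ))) *
        γ ((k+1:ℕ),(0:ℕ)).1 ((k+1:ℕ),(0:ℕ)).2) = 0 by simp, zero_add]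
      refine Finset.sum_congr rfl fun p hp => ?_
      have hf1 : ((p.1.factorial : ℂ)) ≠ 0 := Nat.cast_ne_zero.mpr p.1.factorial_ne_zero
      have hf2 : ((p.2.factorial : ℂ)) ≠ 0 := Nat.cast_ne_zero.mpr p.2.factorial_ne_zero
      rw [Nat.factorial_succ, pow_succ]
      push_cast
      have hne : ((p.2:ℂ) + 1) ≠ 0 := by
        intro h0
        have := Nat.cast_add_one_ne_zero (R := ℂ) p.2
        exact this h0
      field_simp
    calc ((k:ℂ)+1) * T (k+1)
        = ∑ p ∈ Finset.HasAntidiagonal.antidiagonal (k+1),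
            ((k:ℂ)+1) * (((-1:ℂ))^p.2 / ((p.1.factorial : ℂ) * (p.2.factorial : ℂ)) * γ p.1 p.2) := by
          simp only [hT]
          rw [Finset.mul_sum]
      _ = ∑ p ∈ Finset.HasAntidiagonal.antidiagonal (k+1),
            ((p.1 : ℂ) * (((-1:ℂ))^p.2 / ((p.1.factorial : ℂ) * (p.2.factorial : ℂ)) * γ p.1 p.2)
            + (p.2 : ℂ) * (((-1:ℂ))^p.2 / ((p.1.factorial : ℂ) * (p.2.factorial : ℂ)) * γ p.1 p.2)) := by
          refine Finset.sum_congr rfl fun p hp => ?_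
          have hpk : p.1 + p.2 = k + 1 := Finset.HasAntidiagonal.mem_antidiagonal.mp hp
          have hc1 : ((k:ℂ)+1) = (p.1:ℂ) + (p.2:ℂ) := by
            have : ((p.1 + p.2 : ℕ) : ℂ) = ((k+1 : ℕ) : ℂ) := by rw [hpk]
            push_cast at this
            linear_combination -this
          rw [hc1]
          ring
      _ = (∑ p ∈ Finset.HasAntidiagonal.antidiagonal (k+1),
            (p.1 : ℂ) * (((-1:ℂ))^p.2 / ((p.1.factorial : ℂ) * (p.2.factorial : ℂ)) * γ p.1 p.2))
          + ∑ p ∈ Finset.HasAntidiagonal.antidiagonal (k+1),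
            (p.2 : ℂ) * (((-1:ℂ))^p.2 / ((p.1.factorial : ℂ) * (p.2.factorial : ℂ)) * γ p.1 p.2) :=
          Finset.sum_add_distrib
      _ = (∑ p ∈ Finset.HasAntidiagonal.antidiagonal k,
            ((-1:ℂ))^p.2 / ((p.1.factorial : ℂ) * (p.2.factorial : ℂ)) * γ (p.1+1) p.2)
          + ∑ p ∈ Finset.HasAntidiagonal.antidiagonal k,
            -(((-1:ℂ))^p.2 / ((p.1.factorial : ℂ) * (p.2.factorial : ℂ)) * γ p.1 (p.2+1)) := by
          rw [hR1, hR2]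
      _ = ∑ p ∈ Finset.HasAntidiagonal.antidiagonal k,
            ((-1:ℂ))^p.2 / ((p.1.factorial : ℂ) * (p.2.factorial : ℂ)) *
              (γ (p.1+1) p.2 - γ p.1 (p.2+1)) := by
          rw [← Finset.sum_add_distrib]
          exact Finset.sum_congr rfl fun p _ => by ring
      _ = ((e:ℂ) - k) * T k := hL.symm
  -- closed form for T
  have hTform : ∀ k : ℕ, T k = γ 0 0 * ((∏ t ∈ Finset.range k, ((e:ℂ) - t)) / (k.factorial : ℂ)) := by
    intro k
    induction k with
    | zero => simp [hT]
    | succ k ih =>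
      have h1 := hTrec k
      have hkne : ((k:ℂ)+1) ≠ 0 := Nat.cast_add_one_ne_zero k
      have h2 : T (k+1) = ((e:ℂ) - k) * T k / ((k:ℂ)+1) := by
        rw [eq_div_iff hkne]
        linear_combination h1
      rw [h2, ih, Finset.prod_range_succ, Nat.factorial_succ]
      have hfk : ((k.factorial : ℂ)) ≠ 0 := Nat.cast_ne_zero.mpr k.factorial_ne_zero
      push_cast
      field_simp
  -- the ball membership and nonvanishing of z + a
  have hball : (z + a) ∈ Metric.ball z ‖z‖ := by
    rw [Metric.mem_ball, dist_eq_norm]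
    simpa using haz
  have hza : z + a ≠ 0 := by
    intro h0
    have ha2 : a = -z := by linear_combination h0
    rw [ha2, norm_neg] at haz
    exact lt_irrefl _ haz
  have hmono00 := hmono 0 0 (z+a) hball
  simp only [Nat.cast_zero, sub_zero] at hmono00
  have hγ00 : γ 0 0 = c 0 0 z := by
    rw [hγ]
    simp
  have hc00 : ∀ ζ : ℂ, c 0 0 ζ = v' ((φ ζ u) n) := by
    intro ζ
    rw [hc]
    simp
  have hx2 : ‖a / z‖ < 1 := by
    rw [norm_div]
    exact (div_lt_one hz0).mpr haz
  have hbs := (auxBinom e (a/z) hx2).mul_left (γ 0 0)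
  have hsum_eq : ∑' k : ℕ, (a / z)^k * T k = γ 0 0 * (1 + a/z)^e := by
    rw [← hbs.tsum_eq]
    exact tsum_congr fun k => by rw [hTform k]; ring
  have hgp : ∀ p : ℕ × ℕ,
      (a ^ p.1 / (p.1.factorial : ℂ)) * ((-a) ^ p.2 / (p.2.factorial : ℂ)) *
        v' ((Lm1 ^ p.1) ((φ z ((Lm1 ^ p.2) u)) (n - p.1))) = F p := by
    intro p
    simp only [hF, hc]
  constructor
  · exact hsumN.congr fun ij => by rw [← hgp ij]
  · have hfinal : c 0 0 z * (1 + a/z)^e = c 0 0 (z+a) := by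
      have hze : (z:ℂ)^e ≠ 0 := zpow_ne_zero e hz
      have h9 : (1 + a/z)^e = (z+a)^e / z^e := by
        rw [show (1 : ℂ) + a/z = (z+a)/z by field_simp, div_zpow]
      rw [h9]
      field_simp
      linear_combination -hmono00
    calc ∑' ij : ℕ × ℕ, (a ^ ij.1 / (ij.1.factorial : ℂ)) * ((-a) ^ ij.2 / (ij.2.factorial : ℂ)) *
          v' ((Lm1 ^ ij.1) ((φ z ((Lm1 ^ ij.2) u)) (n - ij.1)))
        = ∑' ij : ℕ × ℕ, F ij := tsum_congr fun ij => hgp ij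
      _ = ∑' k : ℕ, ∑ p ∈ Finset.HasAntidiagonal.antidiagonal k, F p := h8
      _ = ∑' k : ℕ, (a / z)^k * T k := tsum_congr fun k => hdiag k
      _ = γ 0 0 * (1 + a/z)^e := hsum_eq
      _ = c 0 0 z * (1 + a/z)^e := by rw [hγ00]
      _ = c 0 0 (z+a) := hfinal
      _ = v' ((φ (z+a) u) n) := hc00 (z+a)

set_option maxHeartbeats 1000000 in
theorem stmt6
    (V : Type) [AddCommGroup V] [Module ℂ V]
    (A : ℤ → Submodule ℂ V)
    (hInt : DirectSum.IsInternal fun n => A n)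
    (hfin : ∀ n : ℤ, FiniteDimensional ℂ (A n))
    (N₀ : ℤ) (hbdd : ∀ n < N₀, A n = ⊥)
    (φ : ℂ → V →ₗ[ℂ] (ℤ → V))
    (hφA : ∀ (z : ℂ) (v : V) (n : ℤ), (φ z v) n ∈ A n)
    (w : ℤ)
    -- L(0)-bracket formula [L(0), φ(z)] = z (d/dz)φ(z) + w φ(z)
    (hL0 : ∀ (m : ℤ) (v : V), v ∈ A m → ∀ (d : ℤ) (l : Module.Dual ℂ V) (z : ℂ), z ≠ 0 →
      ∃ d' : ℂ, HasDerivAt (fun z => l ((φ z v) d)) d' z ∧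
        ((d : ℂ) - (m : ℂ)) * l ((φ z v) d) = z * d' + (w : ℂ) * l ((φ z v) d))
    (Lm1 : V →ₗ[ℂ] V)
    (hLm1wt : ∀ (n : ℤ) (v : V), v ∈ A n → Lm1 v ∈ A (n + 1))
    -- L(-1)-bracket formula [L(-1), φ(z)] = (d/dz) φ(z)
    (hLm1 : ∀ (v : V) (d : ℤ) (l : Module.Dual ℂ V) (z : ℂ), z ≠ 0 →
      HasDerivAt (fun z => l ((φ z v) d))
        (l (Lm1 ((φ z v) (d - 1)) - (φ z (Lm1 v)) d)) z) :
    ∀ (a z : ℂ), z ≠ 0 → ‖a‖ < ‖z‖ →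
      ∀ (v : V) (v' : Module.Dual ℂ V), {d : ℤ | ∃ x ∈ A d, v' x ≠ 0}.Finite →
        Summable (fun ij : ℕ × ℕ =>
          ‖(a ^ ij.1 / (ij.1.factorial : ℂ)) * ((-a) ^ ij.2 / (ij.2.factorial : ℂ)) *
            pairF v' ((shiftOp Lm1)^[ij.1] (φ z ((Lm1 ^ ij.2) v)))‖) ∧
        (∑' ij : ℕ × ℕ,
          (a ^ ij.1 / (ij.1.factorial : ℂ)) * ((-a) ^ ij.2 / (ij.2.factorial : ℂ)) *
            pairF v' ((shiftOp Lm1)^[ij.1] (φ z ((Lm1 ^ ij.2) v))))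
          = pairF v' (φ (z + a) v) := by
  intro a z hz haz v v' hS
  classical
  set t : Finset ℤ := hS.toFinset with ht
  have hv't : ∀ (d : ℤ) (x : V), x ∈ A d → d ∉ t → v' x = 0 := by
    intro d xx hx hd
    by_contra h
    exact hd (hS.mem_toFinset.mpr ⟨xx, hx, h⟩)
  -- Lm1 powers raise degree
  have hpowwt : ∀ (i : ℕ) (d : ℤ) (xx : V), xx ∈ A d → (Lm1 ^ i) xx ∈ A (d + i) := by
    intro i
    induction i with
    | zero => intro d xx hx; simpa using hx
    | succ i ih =>
      intro d xx hx
      have h1 := hLm1wt (d + i) _ (ih d xx hx)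
      rw [pow_succ', Module.End.mul_apply]
      convert h1 using 2
      push_cast
      ring
  -- iterates of shiftOp
  have hshift : ∀ (i : ℕ) (uu : ℤ → V) (n : ℤ),
      ((shiftOp Lm1)^[i] uu) n = (Lm1 ^ i) (uu (n - i)) := by
    intro i
    induction i with
    | zero => intro uu n; simp
    | succ i ih =>
      intro uu n
      rw [Function.iterate_succ_apply, ih (shiftOp Lm1 uu) n]
      show (Lm1 ^ i) (Lm1 (uu (n - i - 1))) = (Lm1 ^ (i+1)) (uu (n - (i+1 : ℕ)))
      rw [pow_succ, Module.End.mul_apply]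
      congr 2
      push_cast
      ring
  -- pairF as a finite sum
  have hpair1 : ∀ (i : ℕ) (uu : V), pairF v' ((shiftOp Lm1)^[i] (φ z uu))
      = ∑ n ∈ t, v' ((Lm1 ^ i) ((φ z uu) ((n:ℤ) - i))) := by
    intro i uu
    rw [pairF, tsum_eq_sum (s := t) ?_]
    · exact Finset.sum_congr rfl fun n _ => by rw [hshift]
    · intro n hn
      rw [hshift]
      refine hv't n _ ?_ hn
      have h1 := hpowwt i (n - i) _ (hφA z uu (n - i))
      have h2 : n - (i:ℤ) + i = n := by ring
      rwa [h2] at h1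
  have hpair2 : ∀ uu : V, pairF v' (φ (z + a) uu) = ∑ n ∈ t, v' ((φ (z + a) uu) n) := by
    intro uu
    rw [pairF, tsum_eq_sum (s := t) ?_]
    intro n hn
    exact hv't n _ (hφA _ _ _) hn
  simp only [hpair1, hpair2]
  -- induction over the internal direct sum
  have hTop : v ∈ ⨆ n, A n := by
    rw [hInt.submodule_iSup_eq_top]
    exact Submodule.mem_top
  refine Submodule.iSup_induction (motive := fun u : V =>
      Summable (fun ij : ℕ × ℕ =>
        ‖(a ^ ij.1 / (ij.1.factorial : ℂ)) * ((-a) ^ ij.2 / (ij.2.factorial : ℂ)) *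
          ∑ n ∈ t, v' ((Lm1 ^ ij.1) ((φ z ((Lm1 ^ ij.2) u)) ((n:ℤ) - ij.1)))‖) ∧
      (∑' ij : ℕ × ℕ,
        (a ^ ij.1 / (ij.1.factorial : ℂ)) * ((-a) ^ ij.2 / (ij.2.factorial : ℂ)) *
          ∑ n ∈ t, v' ((Lm1 ^ ij.1) ((φ z ((Lm1 ^ ij.2) u)) ((n:ℤ) - ij.1))))
        = ∑ n ∈ t, v' ((φ (z + a) u) n))
    (fun n => A n) hTop ?_ ?_ ?_
  · -- homogeneous case
    intro m u hu
    have hkey := fun n : ℤ =>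
      keyLemma V A N₀ hbdd φ hφA w hL0 Lm1 hLm1wt hLm1 a z hz haz u m hu v' n
    constructor
    · -- summability
      refine Summable.of_nonneg_of_le (fun ij => norm_nonneg _) (fun ij => ?_)
        (summable_sum (s := t)
          (f := fun (n : ℤ) (ij : ℕ × ℕ) =>
            ‖(a ^ ij.1 / (ij.1.factorial : ℂ)) * ((-a) ^ ij.2 / (ij.2.factorial : ℂ)) *
              v' ((Lm1 ^ ij.1) ((φ z ((Lm1 ^ ij.2) u)) ((n:ℤ) - ij.1)))‖)
          (fun n _ => (hkey n).1))
      rw [Finset.mul_sum]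
      exact norm_sum_le _ _
    · calc (∑' ij : ℕ × ℕ,
            (a ^ ij.1 / (ij.1.factorial : ℂ)) * ((-a) ^ ij.2 / (ij.2.factorial : ℂ)) *
              ∑ n ∈ t, v' ((Lm1 ^ ij.1) ((φ z ((Lm1 ^ ij.2) u)) ((n:ℤ) - ij.1))))
          = ∑' ij : ℕ × ℕ, ∑ n ∈ t,
              (a ^ ij.1 / (ij.1.factorial : ℂ)) * ((-a) ^ ij.2 / (ij.2.factorial : ℂ)) *
                v' ((Lm1 ^ ij.1) ((φ z ((Lm1 ^ ij.2) u)) ((n:ℤ) - ij.1))) :=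
            tsum_congr fun ij => Finset.mul_sum _ _ _
        _ = ∑ n ∈ t, ∑' ij : ℕ × ℕ,
              (a ^ ij.1 / (ij.1.factorial : ℂ)) * ((-a) ^ ij.2 / (ij.2.factorial : ℂ)) *
                v' ((Lm1 ^ ij.1) ((φ z ((Lm1 ^ ij.2) u)) ((n:ℤ) - ij.1))) :=
            Summable.tsum_finsetSum (fun n _ => (hkey n).1.of_norm)
        _ = ∑ n ∈ t, v' ((φ (z + a) u) n) :=
            Finset.sum_congr rfl fun n _ => (hkey n).2
  · -- zero
    constructor
    · simp only [map_zero, LinearMap.zero_apply, Pi.zero_apply, Finset.sum_const_zero,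
        mul_zero, norm_zero]
      exact summable_zero
    · simp only [map_zero, LinearMap.zero_apply, Pi.zero_apply, Finset.sum_const_zero,
        mul_zero, tsum_zero]
  · -- additivity
    rintro u₁ u₂ ⟨hs1, he1⟩ ⟨hs2, he2⟩
    have hadd : ∀ ij : ℕ × ℕ,
        (a ^ ij.1 / (ij.1.factorial : ℂ)) * ((-a) ^ ij.2 / (ij.2.factorial : ℂ)) *
          ∑ n ∈ t, v' ((Lm1 ^ ij.1) ((φ z ((Lm1 ^ ij.2) (u₁ + u₂))) ((n:ℤ) - ij.1)))
        = ((a ^ ij.1 / (ij.1.factorial : ℂ)) * ((-a) ^ ij.2 / (ij.2.factorial : ℂ)) *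
            ∑ n ∈ t, v' ((Lm1 ^ ij.1) ((φ z ((Lm1 ^ ij.2) u₁)) ((n:ℤ) - ij.1))))
          + ((a ^ ij.1 / (ij.1.factorial : ℂ)) * ((-a) ^ ij.2 / (ij.2.factorial : ℂ)) *
            ∑ n ∈ t, v' ((Lm1 ^ ij.1) ((φ z ((Lm1 ^ ij.2) u₂)) ((n:ℤ) - ij.1)))) := by
      intro ij
      rw [← mul_add, ← Finset.sum_add_distrib]
      congr 1
      refine Finset.sum_congr rfl fun n _ => ?_
      rw [← map_add]
      congr 1
      rw [← map_add]
      congr 1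
      rw [map_add, map_add]
      rfl
    constructor
    · apply Summable.of_nonneg_of_le (fun ij => norm_nonneg _) (fun ij => ?_) (hs1.add hs2)
      rw [hadd ij]
      exact norm_add_le _ _
    · calc (∑' ij : ℕ × ℕ, _) = _ := tsum_congr hadd
        _ = _ + _ := Summable.tsum_add (hs1.of_norm) (hs2.of_norm)
        _ = ∑ n ∈ t, v' ((φ (z + a) (u₁ + u₂)) n) := by
            rw [he1, he2, ← Finset.sum_add_distrib]
            refine Finset.sum_congr rfl fun n _ => ?_
            rw [← map_add]
            congr 1
            rw [map_add]
            rfl
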